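/- Let β = 23/15. Let M ⊆ H be a matching and let A ⊆ H \ M be a finite set of addable edges whose resource sets are pairwise disjoint, such that every e ∈ A is blocked (B(e) ≠ ∅) and every edge of M intersects, in resources, the resource set of at most one edge of A. Define z_j = 1 if j ∈ A_R ∪ B_R and v_j ≥ t; z_j = min{1/3, β·v_j/τ} if j ∈ A_R ∪ B_R and v_j < t; and z_j = 0 otherwise. Then ∑_{j∈R} z_j ≤ |B|; in particular ∑_{j∈R} z_j < |B_P| + 1. -/

import Mathlib

open Finset

/-- The dual weight function. -/
noncomputable def scZ {R : Type*} (v : R → ℝ) (τ : ℝ) (j : R) : ℝ :=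
  if τ / (23 / 6) ≤ v j then 1 else min (1 / 3) ((23 / 15) * v j / τ)

lemma scZ_nonneg {R : Type*} (v : R → ℝ) (τ : ℝ) (hτ : 0 < τ) (hv : ∀ j, 0 < v j) (j : R) :
    0 ≤ scZ v τ j := by
  unfold scZ
  split
  · norm_num
  · have := hv j
    refine le_min (by norm_num) ?_
    positivity

lemma scZ_small_le_third {R : Type*} {v : R → ℝ} {τ : ℝ} {j : R}
    (h : v j < τ / (23 / 6)) : scZ v τ j ≤ 1 / 3 := by
  unfold scZ
  rw [if_neg (not_le.mpr h)]
  exact min_le_left _ _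

lemma scZ_small_le_lin {R : Type*} {v : R → ℝ} {τ : ℝ} {j : R}
    (h : v j < τ / (23 / 6)) : scZ v τ j ≤ 23 / 15 * v j / τ := by
  unfold scZ
  rw [if_neg (not_le.mpr h)]
  exact min_le_right _ _

lemma scZ_sum_lin {R : Type*} [DecidableEq R] {v : R → ℝ} {τ : ℝ} {S : Finset R}
    (h : ∀ j ∈ S, v j < τ / (23 / 6)) :
    ∑ j ∈ S, scZ v τ j ≤ 23 / 15 / τ * ∑ j ∈ S, v j := by
  rw [Finset.mul_sum]
  refine Finset.sum_le_sum fun j hj => ?_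
  calc scZ v τ j ≤ 23 / 15 * v j / τ := scZ_small_le_lin (h j hj)
    _ = 23 / 15 / τ * v j := by ring

/-- a minimal edge is nonempty -/
lemma scEdge_nonempty {R : Type*} [DecidableEq R] {v : R → ℝ} {τ : ℝ} (hτ : 0 < τ)
    {C : Finset R} (h : τ / (23 / 6) ≤ ∑ j ∈ C, v j) : C.Nonempty := by
  rcases C.eq_empty_or_nonempty with rfl | hne
  · simp only [Finset.sum_empty] at h
    nlinarith
  · exact hne

/-- a minimal edge containing a big element is a singleton -/
lemma scEdge_big_singleton {R : Type*} [DecidableEq R] {v : R → ℝ} {τ : ℝ}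
    {C : Finset R} (hC2 : ∀ C' ⊂ C, ∑ j ∈ C', v j < τ / (23 / 6))
    {j₀ : R} (hj₀ : j₀ ∈ C) (hbig : τ / (23 / 6) ≤ v j₀) : C = {j₀} := by
  by_contra hne
  have hss : {j₀} ⊂ C := by
    refine Finset.ssubset_iff_subset_ne.mpr ⟨Finset.singleton_subset_iff.mpr hj₀, ?_⟩
    exact fun h => hne h.symm
  have := hC2 _ hss
  simp only [Finset.sum_singleton] at this
  linarith

/-- sum over a finite union is at most the sum of sums, for nonnegative weights -/
lemma scSum_biUnion_le {ι β : Type*} [DecidableEq β] (s : Finset ι) (t : ι → Finset β)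
    (f : β → ℝ) (hf : ∀ x, 0 ≤ f x) :
    ∑ x ∈ s.biUnion t, f x ≤ ∑ i ∈ s, ∑ x ∈ t i, f x := by
  classical
  induction s using Finset.induction with
  | empty => simp
  | insert _ _ h ih =>
    rename_i a s'
    rw [Finset.biUnion_insert, Finset.sum_insert h]
    calc ∑ x ∈ t a ∪ s'.biUnion t, f x
        = ∑ x ∈ t a, f x + ∑ x ∈ s'.biUnion t \ t a, f x := by
          rw [← Finset.sum_union Finset.disjoint_sdiff, Finset.union_sdiff_self_eq_union]
      _ ≤ ∑ x ∈ t a, f x + ∑ x ∈ s'.biUnion t, f x :=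
          add_le_add_right (Finset.sum_le_sum_of_subset_of_nonneg Finset.sdiff_subset
            (fun i _ _ => hf i)) _
      _ ≤ ∑ x ∈ t a, f x + ∑ i ∈ s', ∑ x ∈ t i, f x := add_le_add_right ih _

/-- helper: value of a small minimal edge is `< t + min` and when `card ≥ 3`, gives good bound -/
lemma scTwoEdge_aux {R : Type*} [DecidableEq R] {v : R → ℝ} {τ : ℝ} (hτ : 0 < τ)
    (hv : ∀ j, 0 < v j)
    {C D : Finset R}
    (hC1 : τ / (23 / 6) ≤ ∑ j ∈ C, v j) (hC2 : ∀ C' ⊂ C, ∑ j ∈ C', v j < τ / (23 / 6))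
    (hD2 : ∀ C' ⊂ D, ∑ j ∈ C', v j < τ / (23 / 6))
    (hCs : ∀ j ∈ C, v j < τ / (23 / 6)) (hDs : ∀ j ∈ D, v j < τ / (23 / 6))
    {x₀ : R} (hx₀ : x₀ ∈ C ∩ D) (hcard : 3 ≤ C.card) :
    ∑ j ∈ C ∪ D, scZ v τ j ≤ 1 := by
  set t : ℝ := τ / (23 / 6) with ht
  rw [Finset.mem_inter] at hx₀
  obtain ⟨m, hm, hmin⟩ := C.exists_min_image v ⟨x₀, hx₀.1⟩
  -- v(C) < t + v m
  have hCv : ∑ j ∈ C, v j < t + v m := by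
    have h1 : ∑ j ∈ C.erase m, v j < t := hC2 _ (Finset.erase_ssubset hm)
    have h2 : ∑ j ∈ C.erase m, v j + v m = ∑ j ∈ C, v j := Finset.sum_erase_add _ _ hm
    linarith
  -- 3 * v m ≤ v(C)
  have h3m : 3 * v m ≤ ∑ j ∈ C, v j := by
    have := Finset.card_nsmul_le_sum C v (v m) (fun x hx => hmin x hx)
    have h3 : (3 : ℝ) ≤ (C.card : ℝ) := by exact_mod_cast hcard
    have hvm : 0 < v m := hv m
    calc (3:ℝ) * v m ≤ (C.card : ℝ) * v m := by nlinarith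
      _ = C.card • v m := by rw [nsmul_eq_mul]
      _ ≤ ∑ j ∈ C, v j := this
  have hmlt : 2 * v m < t := by linarith
  -- v(D \ C) < t
  have hDC : ∑ j ∈ D \ C, v j < t := by
    have hsub : D \ C ⊆ D.erase x₀ := by
      intro j hj
      rw [Finset.mem_sdiff] at hj
      rw [Finset.mem_erase]
      exact ⟨fun h => hj.2 (h ▸ hx₀.1), hj.1⟩
    calc ∑ j ∈ D \ C, v j ≤ ∑ j ∈ D.erase x₀, v j :=
          Finset.sum_le_sum_of_subset_of_nonneg hsub (fun i _ _ => (hv i).le)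
      _ < t := hD2 _ (Finset.erase_ssubset hx₀.2)
  -- total value
  have hU : ∑ j ∈ C ∪ D, v j < 5 / 2 * t := by
    have : ∑ j ∈ C ∪ D, v j = ∑ j ∈ C, v j + ∑ j ∈ D \ C, v j := by
      rw [← Finset.union_sdiff_self_eq_union, Finset.sum_union Finset.disjoint_sdiff]
    rw [this]
    linarith
  have hUs : ∀ j ∈ C ∪ D, v j < t := by
    intro j hj
    rcases Finset.mem_union.mp hj with h | h
    · exact hCs j h
    · exact hDs j h
  calc ∑ j ∈ C ∪ D, scZ v τ j ≤ 23 / 15 / τ * ∑ j ∈ C ∪ D, v j := scZ_sum_lin hUs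
    _ ≤ 23 / 15 / τ * (5 / 2 * t) := by
        apply mul_le_mul_of_nonneg_left hU.le
        positivity
    _ = 1 := by rw [ht]; field_simp; ring
    
/-- the `k = 1` case: two overlapping small minimal edges. -/
lemma scTwoEdge {R : Type*} [DecidableEq R] {v : R → ℝ} {τ : ℝ} (hτ : 0 < τ)
    (hv : ∀ j, 0 < v j)
    {C D : Finset R}
    (hC1 : τ / (23 / 6) ≤ ∑ j ∈ C, v j) (hC2 : ∀ C' ⊂ C, ∑ j ∈ C', v j < τ / (23 / 6))
    (hD1 : τ / (23 / 6) ≤ ∑ j ∈ D, v j) (hD2 : ∀ C' ⊂ D, ∑ j ∈ C', v j < τ / (23 / 6))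
    (hCs : ∀ j ∈ C, v j < τ / (23 / 6)) (hDs : ∀ j ∈ D, v j < τ / (23 / 6))
    (hmeet : (C ∩ D).Nonempty) :
    ∑ j ∈ C ∪ D, scZ v τ j ≤ 1 := by
  obtain ⟨x₀, hx₀⟩ := hmeet
  by_cases h3 : 3 ≤ C.card
  · exact scTwoEdge_aux hτ hv hC1 hC2 hD2 hCs hDs hx₀ h3
  by_cases h3' : 3 ≤ D.card
  · rw [Finset.union_comm]
    exact scTwoEdge_aux hτ hv hD1 hD2 hC2 hDs hCs (by rwa [Finset.inter_comm]) h3'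
  -- both cards ≤ 2, so |C ∪ D| ≤ 3
  push_neg at h3 h3'
  have hcard : (C ∪ D).card ≤ 3 := by
    have h1 : 1 ≤ (C ∩ D).card := Finset.card_pos.mpr ⟨x₀, hx₀⟩
    have := Finset.card_union_add_card_inter C D
    omega
  calc ∑ j ∈ C ∪ D, scZ v τ j ≤ (C ∪ D).card • (1 / 3 : ℝ) :=
        Finset.sum_le_card_nsmul _ _ _ (fun j hj => by
          rcases Finset.mem_union.mp hj with h | h
          · exact scZ_small_le_third (hCs j h)
          · exact scZ_small_le_third (hDs j h))
    _ = ((C ∪ D).card : ℝ) * (1 / 3) := by rw [nsmul_eq_mul]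
    _ ≤ 3 * (1 / 3) := by
        apply mul_le_mul_of_nonneg_right _ (by norm_num)
        exact_mod_cast hcard
    _ = 1 := by norm_num

/-- **Per-cell bound**: an addable edge `C` with nonempty set of blockers `Be`
(resource sets `D b`, pairwise disjoint minimal edges each meeting `C`) satisfies
`z(C ∪ ⋃ D b) ≤ |Be|`. -/
lemma scCell {R ι : Type*} [DecidableEq R] [DecidableEq ι] {v : R → ℝ} {τ : ℝ}
    (hτ : 0 < τ) (hv : ∀ j, 0 < v j)
    {C : Finset R}
    (hC1 : τ / (23 / 6) ≤ ∑ j ∈ C, v j) (hC2 : ∀ C' ⊂ C, ∑ j ∈ C', v j < τ / (23 / 6))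
    {Be : Finset ι} {D : ι → Finset R} (hBe : Be.Nonempty)
    (hD1 : ∀ b ∈ Be, τ / (23 / 6) ≤ ∑ j ∈ D b, v j)
    (hD2 : ∀ b ∈ Be, ∀ C' ⊂ D b, ∑ j ∈ C', v j < τ / (23 / 6))
    (hDdisj : ∀ b₁ ∈ Be, ∀ b₂ ∈ Be, b₁ ≠ b₂ → Disjoint (D b₁) (D b₂))
    (hmeet : ∀ b ∈ Be, (D b ∩ C).Nonempty) :
    ∑ j ∈ C ∪ Be.biUnion D, scZ v τ j ≤ (Be.card : ℝ) := by
  set t : ℝ := τ / (23 / 6) with ht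
  by_cases hbig : ∃ j₀ ∈ C, t ≤ v j₀
  · -- C is a big singleton {j₀}; every blocker equals {j₀}; |Be| = 1
    obtain ⟨j₀, hj₀, hbigj⟩ := hbig
    have hCsing : C = {j₀} := scEdge_big_singleton hC2 hj₀ hbigj
    have hDsing : ∀ b ∈ Be, D b = {j₀} := by
      intro b hb
      obtain ⟨x, hx⟩ := hmeet b hb
      rw [Finset.mem_inter, hCsing, Finset.mem_singleton] at hx
      obtain ⟨hxD, rfl⟩ := hx
      exact scEdge_big_singleton (hD2 b hb) hxD hbigj
    obtain ⟨b₀, hb₀⟩ := hBe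
    have hBe1 : Be = {b₀} := by
      apply Finset.eq_singleton_iff_unique_mem.mpr
      refine ⟨hb₀, fun b hb => ?_⟩
      by_contra hne
      have hdisj := hDdisj b hb b₀ hb₀ hne
      rw [hDsing b hb, hDsing b₀ hb₀] at hdisj
      exact (Finset.disjoint_singleton_left.mp hdisj) (Finset.mem_singleton_self j₀)
    have hU : C ∪ Be.biUnion D = {j₀} := by
      rw [hBe1, Finset.singleton_biUnion, hDsing b₀ hb₀, hCsing, Finset.union_self]
    rw [hU, hBe1, Finset.sum_singleton, Finset.card_singleton]
    unfold scZ
    rw [if_pos hbigj]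
    norm_num
  · -- all resources of C (and of all blockers) are small
    push_neg at hbig
    have hCs : ∀ j ∈ C, v j < t := hbig
    have hDs : ∀ b ∈ Be, ∀ j ∈ D b, v j < t := by
      intro b hb j hj
      by_contra hge
      push_neg at hge
      have hsing : D b = {j} := scEdge_big_singleton (hD2 b hb) hj hge
      obtain ⟨x, hx⟩ := hmeet b hb
      rw [Finset.mem_inter, hsing, Finset.mem_singleton] at hx
      obtain ⟨rfl, hxC⟩ := hx
      exact absurd (hCs _ hxC) (not_lt.mpr hge)
    rcases eq_or_lt_of_le (Nat.succ_le_of_lt (Finset.card_pos.mpr hBe) : 1 ≤ Be.card) with h1 | h2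
    · -- exactly one blocker: use the two-edge lemma
      obtain ⟨b₀, hb₀⟩ := Finset.card_eq_one.mp h1.symm
      rw [hb₀, Finset.singleton_biUnion, Finset.card_singleton]
      have hb₀Be : b₀ ∈ Be := hb₀ ▸ Finset.mem_singleton_self b₀
      push_cast
      exact scTwoEdge hτ hv hC1 hC2 (hD1 b₀ hb₀Be) (hD2 b₀ hb₀Be) hCs
        (hDs b₀ hb₀Be) (by rw [Finset.inter_comm]; exact hmeet b₀ hb₀Be)
    · -- k ≥ 2 blockers
      have hk : 2 ≤ Be.card := h2
      -- z(C) ≤ 1/3 + 2/5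
      have hCz : ∑ j ∈ C, scZ v τ j ≤ 11 / 15 := by
        obtain ⟨a, ha⟩ := scEdge_nonempty hτ hC1
        have h1 : ∑ j ∈ C.erase a, scZ v τ j ≤ 23 / 15 / τ * ∑ j ∈ C.erase a, v j :=
          scZ_sum_lin (fun j hj => hCs j (Finset.mem_of_mem_erase hj))
        have h2' : ∑ j ∈ C.erase a, v j < t := hC2 _ (Finset.erase_ssubset ha)
        have h3 : ∑ j ∈ C.erase a, scZ v τ j + scZ v τ a = ∑ j ∈ C, scZ v τ j :=
          Finset.sum_erase_add _ _ ha
        have h4 : scZ v τ a ≤ 1 / 3 := scZ_small_le_third (hCs a ha)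
        have h5 : 23 / 15 / τ * ∑ j ∈ C.erase a, v j < 2 / 5 := by
          have : 23 / 15 / τ * ∑ j ∈ C.erase a, v j < 23 / 15 / τ * t := by
            apply mul_lt_mul_of_pos_left h2'
            positivity
          have ht' : 23 / 15 / τ * t = 2 / 5 := by rw [ht]; field_simp; ring
          linarith
        linarith
      -- each blocker contributes ≤ 2/5 outside C
      have hbz : ∀ b ∈ Be, ∑ j ∈ D b \ C, scZ v τ j ≤ 2 / 5 := by
        intro b hb
        obtain ⟨x₀, hx₀⟩ := hmeet b hb
        rw [Finset.mem_inter] at hx₀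
        have hsub : D b \ C ⊆ (D b).erase x₀ := by
          intro j hj
          rw [Finset.mem_sdiff] at hj
          rw [Finset.mem_erase]
          exact ⟨fun h => hj.2 (h ▸ hx₀.2), hj.1⟩
        have h1 : ∑ j ∈ D b \ C, scZ v τ j ≤ 23 / 15 / τ * ∑ j ∈ D b \ C, v j :=
          scZ_sum_lin (fun j hj => hDs b hb j (Finset.mem_sdiff.mp hj).1)
        have h2' : ∑ j ∈ D b \ C, v j < t := by
          calc ∑ j ∈ D b \ C, v j ≤ ∑ j ∈ (D b).erase x₀, v j :=
              Finset.sum_le_sum_of_subset_of_nonneg hsub (fun i _ _ => (hv i).le)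
            _ < t := hD2 b hb _ (Finset.erase_ssubset hx₀.1)
        have h5 : 23 / 15 / τ * ∑ j ∈ D b \ C, v j ≤ 2 / 5 := by
          have h6 : 23 / 15 / τ * ∑ j ∈ D b \ C, v j ≤ 23 / 15 / τ * t := by
            apply mul_le_mul_of_nonneg_left h2'.le
            positivity
          have ht' : 23 / 15 / τ * t = 2 / 5 := by rw [ht]; field_simp; ring
          linarith
        linarith
      -- assemble
      have hsplit : ∑ j ∈ C ∪ Be.biUnion D, scZ v τ j =
          ∑ j ∈ C, scZ v τ j + ∑ j ∈ Be.biUnion D \ C, scZ v τ j := by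
        rw [← Finset.sum_union Finset.disjoint_sdiff, Finset.union_sdiff_self_eq_union]
      have hsdiff : Be.biUnion D \ C = Be.biUnion (fun b => D b \ C) := by
        ext j
        simp only [Finset.mem_sdiff, Finset.mem_biUnion]
        tauto
      have hrest : ∑ j ∈ Be.biUnion D \ C, scZ v τ j ≤ (Be.card : ℝ) * (2 / 5) := by
        rw [hsdiff]
        calc ∑ j ∈ Be.biUnion (fun b => D b \ C), scZ v τ j
            ≤ ∑ b ∈ Be, ∑ j ∈ D b \ C, scZ v τ j :=
              scSum_biUnion_le _ _ _ (scZ_nonneg v τ hτ hv)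
          _ ≤ ∑ b ∈ Be, (2 / 5 : ℝ) := Finset.sum_le_sum hbz
          _ = (Be.card : ℝ) * (2 / 5) := by rw [Finset.sum_const, nsmul_eq_mul]
      have hkr : (2 : ℝ) ≤ (Be.card : ℝ) := by exact_mod_cast hk
      rw [hsplit]
      nlinarith


/-- Let `β = 23/15`, `α = 23/6`, `t = τ/α`.  Hyperedges are pairs `(i, C)` with
`C ⊆ Rof i` minimal for threshold `t`.  Let `M` be a matching and `A` a set
of addable edges (edges not in `M`) with pairwise disjoint resource sets,
such that every `e ∈ A` is blocked and every edge of `M` meets the resource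
set of at most one edge of `A`.  With `B = {e' ∈ M : ∃ e ∈ A, e'.2 ∩ e.2 ≠ ∅}`
the set of blocking edges, define `z j = 1` if `j ∈ A_R ∪ B_R` and `v j ≥ t`;
`z j = min (1/3) (β * v j / τ)` if `j ∈ A_R ∪ B_R` and `v j < t`; and
`z j = 0` otherwise.  Then `∑ j, z j ≤ |B|`; in particular
`∑ j, z j < |B_P| + 1`. -/
theorem santa_claus_dual_negativity_claim
    {P R : Type*} [Fintype P] [Fintype R] [DecidableEq P] [DecidableEq R]
    (v : R → ℝ) (hv : ∀ j, 0 < v j) (Rof : P → Finset R)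
    (τ : ℝ) (hτ : 0 < τ)
    (M A : Finset (P × Finset R))
    -- `M ⊆ H` : every edge of `M` is a hyperedge
    (hM_edge : ∀ e ∈ M, e.2 ⊆ Rof e.1 ∧
      τ / (23 / 6) ≤ ∑ j ∈ e.2, v j ∧
      ∀ C' ⊂ e.2, ∑ j ∈ C', v j < τ / (23 / 6))
    -- `M` is a matching
    (hM_match : ∀ e₁ ∈ M, ∀ e₂ ∈ M, e₁ ≠ e₂ →
      e₁.1 ≠ e₂.1 ∧ Disjoint e₁.2 e₂.2)
    -- `A ⊆ H \ M`
    (hA_edge : ∀ e ∈ A, (e.2 ⊆ Rof e.1 ∧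
      τ / (23 / 6) ≤ ∑ j ∈ e.2, v j ∧
      ∀ C' ⊂ e.2, ∑ j ∈ C', v j < τ / (23 / 6)) ∧ e ∉ M)
    -- the resource sets of the edges of `A` are pairwise disjoint
    (hA_disj : ∀ e₁ ∈ A, ∀ e₂ ∈ A, e₁ ≠ e₂ → Disjoint e₁.2 e₂.2)
    -- every `e ∈ A` is blocked: `B(e) ≠ ∅`
    (hblocked : ∀ e ∈ A, ∃ e' ∈ M, (e'.2 ∩ e.2).Nonempty)
    -- every edge of `M` meets the resources of at most one edge of `A`
    (hone : ∀ e' ∈ M, ∀ e₁ ∈ A, ∀ e₂ ∈ A,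
      (e'.2 ∩ e₁.2).Nonempty → (e'.2 ∩ e₂.2).Nonempty → e₁ = e₂)
    (z : R → ℝ)
    (hz : ∀ j, z j =
      if j ∈ A.biUnion Prod.snd ∪
          (M.filter (fun e' => ∃ e ∈ A, (e'.2 ∩ e.2).Nonempty)).biUnion Prod.snd
      then (if τ / (23 / 6) ≤ v j then 1
            else min (1 / 3) ((23 / 15) * v j / τ))
      else 0) :
    ∑ j, z j ≤ ((M.filter (fun e' => ∃ e ∈ A, (e'.2 ∩ e.2).Nonempty)).card : ℝ) ∧
    ∑ j, z j <
      (((M.filter (fun e' => ∃ e ∈ A, (e'.2 ∩ e.2).Nonempty)).image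
        Prod.fst).card : ℝ) + 1 := by
  
  classical
  set B : Finset (P × Finset R) :=
    M.filter (fun e' => ∃ e ∈ A, (e'.2 ∩ e.2).Nonempty) with hB
  -- the blockers of a fixed addable edge
  set Be : (P × Finset R) → Finset (P × Finset R) :=
    fun e => M.filter (fun e' => (e'.2 ∩ e.2).Nonempty) with hBe
  -- rewrite z via scZ
  have hz' : ∀ j, z j =
      if j ∈ A.biUnion Prod.snd ∪ B.biUnion Prod.snd then scZ v τ j else 0 := by
    intro j
    rw [hz]
    rfl
  -- step 1 : total sum equals sum over the support
  have hsum1 : ∑ j, z j =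
      ∑ j ∈ A.biUnion Prod.snd ∪ B.biUnion Prod.snd, scZ v τ j := by
    calc ∑ j, z j
        = ∑ j ∈ Finset.univ,
            (if j ∈ A.biUnion Prod.snd ∪ B.biUnion Prod.snd then scZ v τ j else 0) :=
          Finset.sum_congr rfl (fun j _ => hz' j)
      _ = ∑ j ∈ Finset.univ ∩ (A.biUnion Prod.snd ∪ B.biUnion Prod.snd), scZ v τ j :=
          Finset.sum_ite_mem _ _ _
      _ = ∑ j ∈ A.biUnion Prod.snd ∪ B.biUnion Prod.snd, scZ v τ j := by
          rw [Finset.univ_inter]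
  -- step 2 : the support is contained in the union of the cells
  have hsupp : A.biUnion Prod.snd ∪ B.biUnion Prod.snd ⊆
      A.biUnion (fun e => e.2 ∪ (Be e).biUnion Prod.snd) := by
    intro j hj
    rw [Finset.mem_union] at hj
    rcases hj with hj | hj
    · obtain ⟨e, he, hje⟩ := Finset.mem_biUnion.mp hj
      exact Finset.mem_biUnion.mpr ⟨e, he, Finset.mem_union_left _ hje⟩
    · obtain ⟨e', he', hje'⟩ := Finset.mem_biUnion.mp hj
      rw [hB, Finset.mem_filter] at he'
      obtain ⟨e, heA, hmeet⟩ := he'.2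
      refine Finset.mem_biUnion.mpr ⟨e, heA, Finset.mem_union_right _ ?_⟩
      refine Finset.mem_biUnion.mpr ⟨e', ?_, hje'⟩
      rw [hBe]
      exact Finset.mem_filter.mpr ⟨he'.1, hmeet⟩
  -- step 3 : bound the sum, cell by cell
  have hcell : ∀ e ∈ A, ∑ j ∈ e.2 ∪ (Be e).biUnion Prod.snd, scZ v τ j ≤
      ((Be e).card : ℝ) := by
    intro e heA
    have hBene : (Be e).Nonempty := by
      obtain ⟨e', he'M, hne⟩ := hblocked e heA
      exact ⟨e', by rw [hBe]; exact Finset.mem_filter.mpr ⟨he'M, hne⟩⟩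
    refine scCell hτ hv ((hA_edge e heA).1.2.1) ((hA_edge e heA).1.2.2) hBene
      (fun b hb => (hM_edge b (Finset.mem_of_mem_filter b hb)).2.1)
      (fun b hb => (hM_edge b (Finset.mem_of_mem_filter b hb)).2.2)
      (fun b₁ hb₁ b₂ hb₂ hne =>
        (hM_match b₁ (Finset.mem_of_mem_filter b₁ hb₁)
          b₂ (Finset.mem_of_mem_filter b₂ hb₂) hne).2)
      (fun b hb => (Finset.mem_filter.mp hb).2)
  -- step 4 : the groups of blockers are pairwise disjoint and lie in B
  have hBedisj : ∀ e₁ ∈ A, ∀ e₂ ∈ A, e₁ ≠ e₂ → Disjoint (Be e₁) (Be e₂) := by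
    intro e₁ h₁ e₂ h₂ hne
    rw [Finset.disjoint_left]
    intro b hb₁ hb₂
    rw [hBe] at hb₁ hb₂
    rw [Finset.mem_filter] at hb₁ hb₂
    exact hne (hone b hb₁.1 e₁ h₁ e₂ h₂ hb₁.2 hb₂.2)
  have hcardle : ∑ e ∈ A, (Be e).card ≤ B.card := by
    rw [← Finset.card_biUnion hBedisj]
    apply Finset.card_le_card
    intro b hb
    obtain ⟨e, heA, hbe⟩ := Finset.mem_biUnion.mp hb
    rw [hBe] at hbe
    rw [Finset.mem_filter] at hbe
    rw [hB, Finset.mem_filter]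
    exact ⟨hbe.1, e, heA, hbe.2⟩
  -- main bound
  have hmain : ∑ j, z j ≤ (B.card : ℝ) := by
    rw [hsum1]
    calc ∑ j ∈ A.biUnion Prod.snd ∪ B.biUnion Prod.snd, scZ v τ j
        ≤ ∑ j ∈ A.biUnion (fun e => e.2 ∪ (Be e).biUnion Prod.snd), scZ v τ j :=
          Finset.sum_le_sum_of_subset_of_nonneg hsupp
            (fun i _ _ => scZ_nonneg v τ hτ hv i)
      _ ≤ ∑ e ∈ A, ∑ j ∈ e.2 ∪ (Be e).biUnion Prod.snd, scZ v τ j :=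
          scSum_biUnion_le _ _ _ (scZ_nonneg v τ hτ hv)
      _ ≤ ∑ e ∈ A, ((Be e).card : ℝ) := Finset.sum_le_sum hcell
      _ = ((∑ e ∈ A, (Be e).card : ℕ) : ℝ) := by push_cast; ring
      _ ≤ (B.card : ℝ) := by exact_mod_cast hcardle
  refine ⟨hmain, ?_⟩
  have himg : (B.image Prod.fst).card = B.card := by
    apply Finset.card_image_of_injOn
    intro a ha b hb hfst
    by_contra hne
    exact (hM_match a (Finset.mem_of_mem_filter a ha)
      b (Finset.mem_of_mem_filter b hb) hne).1 hfst
  have : ((B.image Prod.fst).card : ℝ) = (B.card : ℝ) := by exact_mod_cast himg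
  rw [this]
  linarith
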